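/- Let m ∈ ℕ with m ≥ 1 and set c := 1/exp_m(2·√((log(3/2))² + π²)). Then for every real s with 0 < s < c, every τ ∈ (−π, π) and every l ∈ {0,…,m−1}: log^{[l]}(−log s) is a positive real number, log^{[l]}(−log s − iτ) = log^{[l]}(−log(s·e^{iτ})) lies in ℂ⁻, and |log^{[l]}(−log s − iτ) − log^{[l]}(−log s)| < (1/2)·log^{[l]}(−log s). (This is the content of the Claim in the proof of Proposition 5.72 of the paper, namely that T_l(s,τ) = log_l(−log(s e^{iτ})) = log_l(−log s)·(1 + S_l(s,τ)) with |S_l(s,τ)| < 1/2.) -/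

import Mathlib

/-- The `j`-fold iterate `log^{[j]}` of the principal complex logarithm. -/
noncomputable def logIter : ℕ → ℂ → ℂ
  | 0, w => w
  | j + 1, w => Complex.log (logIter j w)

/-- The `j`-fold iterated real exponential `exp_j`. -/
noncomputable def expIter : ℕ → ℝ → ℝ
  | 0, x => x
  | j + 1, x => Real.exp (expIter j x)

lemma le_expIter (K : ℝ) : ∀ j, K ≤ expIter j K := by
  intro j
  induction j with
  | zero => simp [expIter]
  | succ j ih =>
    calc K ≤ expIter j K := ih
    _ ≤ expIter j K + 1 := by linarith
    _ ≤ Real.exp (expIter j K) := Real.add_one_le_exp _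
    _ = expIter (j+1) K := rfl

lemma logIterReal (K : ℝ) : ∀ l j y, expIter (j + l) K < y → expIter j K < (Real.log)^[l] y := by
  intro l
  induction l with
  | zero => intro j y h; simpa using h
  | succ l ih =>
    intro j y h
    rw [Function.iterate_succ_apply]
    apply ih
    have h' : Real.exp (expIter (j + l) K) < y := by
      have e : expIter (j + (l + 1)) K = Real.exp (expIter (j + l) K) := by
        show expIter (j + l + 1) K = _
        rfl
      rwa [e] at h
    have h0 : (0:ℝ) < y := lt_trans (Real.exp_pos _) h'
    rwa [Real.lt_log_iff_exp_lt h0]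


/-- The Claim in the proof of **Proposition 5.72**: let `m ≥ 1` and
`c := 1 / exp_m (2 * √((log (3/2))² + π²))`. Then for every real `0 < s < c`, every
`τ ∈ (-π, π)` and every `l ∈ {0,…,m-1}`: `log^{[l]} (-log s)` is a positive real,
`log^{[l]} (-log s - iτ) = log^{[l]} (-log (s·e^{iτ}))` lies in the slit plane `ℂ⁻`,
and `|log^{[l]} (-log s - iτ) - log^{[l]} (-log s)| < (1/2) · log^{[l]} (-log s)`. -/
theorem logIter_neg_log_sub_I_tau (m : ℕ) (hm : 1 ≤ m)
    (c : ℝ) (hc : c = 1 / expIter m (2 * Real.sqrt ((Real.log (3 / 2)) ^ 2 + Real.pi ^ 2)))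
    (s : ℝ) (hs : 0 < s) (hsc : s < c)
    (τ : ℝ) (hτ₁ : -Real.pi < τ) (hτ₂ : τ < Real.pi)
    (l : ℕ) (hl : l < m) :
    (logIter l (-(Real.log s : ℂ))).im = 0 ∧
    0 < (logIter l (-(Real.log s : ℂ))).re ∧
    logIter l (-(Real.log s : ℂ) - Complex.I * (τ : ℂ)) =
      logIter l (-Complex.log ((s : ℂ) * Complex.exp (Complex.I * (τ : ℂ)))) ∧
    logIter l (-(Real.log s : ℂ) - Complex.I * (τ : ℂ)) ∈ Complex.slitPlane ∧
    ‖logIter l (-(Real.log s : ℂ) - Complex.I * (τ : ℂ)) -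
        logIter l (-(Real.log s : ℂ))‖ <
      (1 / 2) * (logIter l (-(Real.log s : ℂ))).re := by
  have pi_pos := Real.pi_pos
  set K : ℝ := 2 * Real.sqrt ((Real.log (3 / 2)) ^ 2 + Real.pi ^ 2) with hKdef
  -- K ≥ 2π
  have hK : 2 * Real.pi ≤ K := by
    have h1 : Real.pi = Real.sqrt (Real.pi ^ 2) := (Real.sqrt_sq pi_pos.le).symm
    have h2 : Real.sqrt (Real.pi ^ 2) ≤ Real.sqrt ((Real.log (3 / 2)) ^ 2 + Real.pi ^ 2) :=
      Real.sqrt_le_sqrt (by nlinarith [sq_nonneg (Real.log (3/2))])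
    rw [hKdef]
    nlinarith [h1, h2]
  set x : ℝ := -Real.log s with hxdef
  -- x > expIter (m-1) K
  have hx : expIter (m - 1) K < x := by
    have hE : expIter m K = Real.exp (expIter (m - 1) K) := by
      have : m = (m - 1) + 1 := by omega
      rw [this]; rfl
    have hEpos : (0:ℝ) < expIter m K := hE ▸ Real.exp_pos _
    have hlog : Real.log s < Real.log c := Real.log_lt_log hs hsc
    rw [hc, one_div, Real.log_inv, hE, Real.log_exp] at hlog
    rw [hxdef]; linarith
  -- lower bound on iterated logs of x
  have ha : ∀ k, k < m → K < (Real.log)^[k] x := by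
    intro k hk
    have h1 : K ≤ expIter (m - 1 - k) K := le_expIter K _
    have h2 : expIter (m - 1 - k) K < (Real.log)^[k] x := by
      apply logIterReal
      have : m - 1 - k + k = m - 1 := by omega
      rwa [this]
    linarith
  have ha' : ∀ k, k < m → (0:ℝ) < (Real.log)^[k] x := fun k hk =>
    lt_trans (by linarith) (ha k hk)
  -- main induction
  have key : ∀ k, k < m →
      logIter k ((x:ℝ) : ℂ) = (((Real.log)^[k] x : ℝ) : ℂ) ∧
      ‖logIter k ((x:ℂ) - Complex.I * (τ:ℂ)) - (((Real.log)^[k] x : ℝ) : ℂ)‖ <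
        Real.pi := by
    intro k
    induction k with
    | zero =>
      intro _
      constructor
      · rfl
      · show ‖(x:ℂ) - Complex.I * (τ:ℂ) - (x:ℂ)‖ < Real.pi
        have : (x:ℂ) - Complex.I * (τ:ℂ) - (x:ℂ) = -(Complex.I * (τ:ℂ)) := by ring
        rw [this]
        simp [abs_lt]
        exact ⟨by linarith, hτ₂⟩
    | succ k ih =>
      intro hk
      obtain ⟨h1, h2⟩ := ih (by omega)
      set a : ℝ := (Real.log)^[k] x with hadef
      have haK : K < a := ha k (by omega)
      have ha0 : (0:ℝ) < a := ha' k (by omega)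
      have ha2π : 2 * Real.pi < a := lt_of_le_of_lt hK haK
      set T : ℂ := logIter k ((x:ℂ) - Complex.I * (τ:ℂ)) with hTdef
      set u : ℂ := (T - (a:ℂ)) / (a:ℂ) with hudef
      have hanz : ((a:ℝ):ℂ) ≠ 0 := by
        simpa using ha0.ne'
      have hTu : T = (a:ℂ) * (1 + u) := by
        rw [hudef]; field_simp; ring
      have hunorm : ‖u‖ < 1/2 := by
        have : ‖u‖ = ‖T - (a:ℂ)‖ / a := by
          rw [hudef]
          simp [norm_div, abs_of_pos ha0, map_div₀]
        rw [this, div_lt_iff₀ ha0]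
        calc ‖T - (a:ℂ)‖ < Real.pi := h2
        _ = 1/2 * (2 * Real.pi) := by ring
        _ < 1/2 * a := by linarith
      have hu1 : 1 + u ≠ 0 := by
        intro h
        have : ‖u‖ = 1 := by
          have : u = -1 := by linear_combination h
          rw [this]; simp
        linarith
      -- iterated log of the real point
      have hreal : logIter (k+1) ((x:ℝ) : ℂ) = (((Real.log)^[k+1] x : ℝ) : ℂ) := by
        show Complex.log (logIter k ((x:ℝ):ℂ)) = _
        rw [h1, Function.iterate_succ_apply', ← hadef]
        exact (Complex.ofReal_log ha0.le).symm
      refine ⟨hreal, ?_⟩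
      show ‖Complex.log T - (((Real.log)^[k+1] x : ℝ) : ℂ)‖ < Real.pi
      rw [Function.iterate_succ_apply', ← hadef]
      have hlogT : Complex.log T = ((Real.log a : ℝ) : ℂ) + Complex.log (1 + u) := by
        rw [hTu, Complex.log_ofReal_mul ha0 hu1]
      rw [hlogT]
      have : ((Real.log a : ℝ) : ℂ) + Complex.log (1 + u) - ((Real.log a : ℝ) : ℂ)
          = Complex.log (1 + u) := by ring
      rw [this]
      calc ‖Complex.log (1 + u)‖ ≤ 3/2 * ‖u‖ :=
            Complex.norm_log_one_add_half_le_self hunorm.le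
      _ < 3/2 * (1/2) := by nlinarith [norm_nonneg u]
      _ < Real.pi := by nlinarith [Real.pi_gt_three]
  -- assemble
  have hxc : -(Real.log s : ℂ) = ((x:ℝ) : ℂ) := by
    rw [hxdef]; push_cast; ring
  obtain ⟨k1, k2⟩ := key l hl
  have haK := ha l hl
  have ha0 := ha' l hl
  have ha2π : 2 * Real.pi < (Real.log)^[l] x := lt_of_le_of_lt hK haK
  rw [hxc, k1]
  have harg : -(Complex.log ((s : ℂ) * Complex.exp (Complex.I * (τ : ℂ))))
      = ((x:ℝ):ℂ) - Complex.I * (τ:ℂ) := by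
    have hse : (s : ℂ) * Complex.exp (Complex.I * (τ : ℂ))
        = Complex.exp (((Real.log s : ℝ):ℂ) + Complex.I * (τ:ℂ)) := by
      rw [Complex.exp_add]
      congr 1
      rw [← Complex.ofReal_exp, Real.exp_log hs]
    rw [hse, Complex.log_exp (by simp [Complex.add_im]; linarith)
      (by simp [Complex.add_im]; linarith)]
    rw [hxdef]; push_cast; ring
  have hre : Real.pi ≤ ((Real.log)^[l] x) - Real.pi := by linarith
  refine ⟨by simp, by simp [ha0], by rw [harg], ?_, ?_⟩
  · -- slitPlane
    rw [Complex.mem_slitPlane_iff]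
    left
    have := Complex.abs_re_le_norm (logIter l (((x:ℝ):ℂ) - Complex.I * (τ:ℂ)) -
      (((Real.log)^[l] x : ℝ):ℂ))
    have hre2 : (logIter l (((x:ℝ):ℂ) - Complex.I * (τ:ℂ))).re
        = ((Real.log)^[l] x) + (logIter l (((x:ℝ):ℂ) - Complex.I * (τ:ℂ)) -
          (((Real.log)^[l] x : ℝ):ℂ)).re := by
      simp
    rw [hre2]
    have habs := abs_le.mp (le_of_lt (lt_of_le_of_lt this k2))
    linarith [habs.1]
  · rw [Complex.ofReal_re]
    calc ‖_‖ < Real.pi := k2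
    _ < 1/2 * ((Real.log)^[l] x) := by linarith
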